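/- Comparison theorem for uniform large deviation lower bounds (Theorem 4.1, lower bound, abstract form): Let (E, ρ) be a separable metric space, I and I' nonempty index sets, Ψ : I → I' a map, (Ω, 𝓕, P) a probability space, and for each t > 0 let L_t^ν (ν ∈ I) and L̄_t^{ν'} (ν' ∈ I') be Borel-measurable maps from Ω to E. Let J : E → [0,∞] have compact level sets. Assume: (i) for every open set A ⊆ E, liminf_{t→∞} (1/t) · inf_{ν'∈Ψ(I)} log P(L̄_t^{ν'} ∈ A) ≥ −inf_{x∈A} J(x); (ii) for each ν ∈ I there is a jointly measurable g^ν : Ω × [0,∞) → [0,1] such that for every t > 0, ρ(L_t^ν, L̄_t^{Ψ(ν)}) ≤ (1/t) · ∫₀^t g^ν(·, s) ds holds P-almost surely; and (iii) for every real N ≥ 1, sup_{ν∈I} E[exp(N · ∫₀^∞ g^ν(·, s) ds)] < ∞. Then for every open set A ⊆ E, liminf_{t→∞} (1/t) · inf_{ν∈I} log P(L_t^ν ∈ A) ≥ −inf_{x∈A} J(x). -/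

import Mathlib

open MeasureTheory Filter Set
open scoped ENNReal NNReal

/-- The exponential function on `ℝ≥0∞`, with the convention `exp (+∞) = +∞`. -/
noncomputable def expENN (x : ℝ≥0∞) : ℝ≥0∞ :=
  if x = ⊤ then ⊤ else ENNReal.ofReal (Real.exp x.toReal)

lemma expENN_mono : Monotone expENN := by
  intro x y h
  unfold expENN
  split_ifs with hx hy hy
  · exact le_rfl
  · exact absurd (top_le_iff.mp (hx ▸ h)) hy
  · exact le_top
  · exact ENNReal.ofReal_le_ofReal (Real.exp_le_exp.mpr (ENNReal.toReal_mono hy h))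

lemma measurable_expENN : Measurable expENN := by
  unfold expENN
  refine Measurable.ite ?_ measurable_const
    (ENNReal.measurable_ofReal.comp (Real.continuous_exp.measurable.comp
      ENNReal.measurable_toReal))
  have : {x : ℝ≥0∞ | x = ⊤} = {⊤} := by ext; simp
  rw [this]; exact measurableSet_singleton _

lemma expENN_ofReal {c : ℝ} (hc : 0 ≤ c) :
    expENN (ENNReal.ofReal c) = ENNReal.ofReal (Real.exp c) := by
  unfold expENN
  rw [if_neg ENNReal.ofReal_ne_top, ENNReal.toReal_ofReal hc]

lemma ereal_le_inv_mul {t b : ℝ} (ht : 0 < t) (x : EReal) :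
    ((b : ℝ) : EReal) ≤ ((1 / t : ℝ) : EReal) * x ↔ ((b * t : ℝ) : EReal) ≤ x := by
  have h1t : (0 : ℝ) < 1 / t := by positivity
  induction x using EReal.rec with
  | bot =>
      rw [EReal.coe_mul_bot_of_pos h1t]
      simp only [le_bot_iff]
      constructor
      · intro h; exact absurd h (EReal.coe_ne_bot _)
      · intro h; exact absurd h (EReal.coe_ne_bot _)
  | coe y =>
      rw [← EReal.coe_mul, EReal.coe_le_coe_iff, EReal.coe_le_coe_iff, one_div,
        inv_mul_eq_div, le_div_iff₀ ht]
  | top =>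
      rw [EReal.coe_mul_top_of_pos h1t]
      simp

/-- **Comparison theorem for uniform LDP, lower bound** (Theorem 4.1 of the paper,
abstract form). If the reference family `Lbar` (indexed over `Ψ(I)`) satisfies the
uniform large deviation lower bound with rate function `J`, and `ρ(L_t^ν, L̄_t^{Ψν})`
is dominated by the time average of a `[0,1]`-valued process `g^ν` having uniformly
finite exponential moments, then `L` satisfies the same uniform lower bound. -/
theorem comparison_theorem_lower
    {E : Type*} [MetricSpace E] [TopologicalSpace.SeparableSpace E]
    [MeasurableSpace E] [BorelSpace E]
    {I I' : Type*} [Nonempty I] [Nonempty I'] (Ψ : I → I')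
    {Ω : Type*} [MeasurableSpace Ω] (P : Measure Ω) [IsProbabilityMeasure P]
    (L : I → ℝ → Ω → E) (Lbar : I' → ℝ → Ω → E)
    (hL : ∀ ν : I, ∀ t > (0 : ℝ), Measurable (L ν t))
    (hLbar : ∀ ν' : I', ∀ t > (0 : ℝ), Measurable (Lbar ν' t))
    (J : E → ℝ≥0∞) (hJ : ∀ r : NNReal, IsCompact {x : E | J x ≤ r})
    -- (i) uniform lower bound for the reference family, over `Ψ(I)`
    (hlower : ∀ A : Set E, IsOpen A →
      -(⨅ x ∈ A, (J x : EReal)) ≤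
        liminf (fun t : ℝ =>
          ((1 / t : ℝ) : EReal) *
            ⨅ ν' ∈ Set.range Ψ, ENNReal.log (P {ω | Lbar ν' t ω ∈ A})) atTop)
    -- (ii)+(iii) domination by a process with uniform exponential moments
    (hdom : ∃ g : I → Ω → ℝ → ℝ,
      (∀ ν : I, Measurable (Function.uncurry (g ν))) ∧
      (∀ (ν : I) (ω : Ω) (s : ℝ), g ν ω s ∈ Set.Icc (0 : ℝ) 1) ∧
      (∀ ν : I, ∀ t > (0 : ℝ), ∀ᵐ ω ∂P,
        ENNReal.ofReal (dist (L ν t ω) (Lbar (Ψ ν) t ω)) ≤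
          (ENNReal.ofReal t)⁻¹ *
            ∫⁻ s in Set.Icc (0 : ℝ) t, ENNReal.ofReal (g ν ω s)) ∧
      (∀ N : ℝ, 1 ≤ N →
        (⨆ ν : I, ∫⁻ ω, expENN (ENNReal.ofReal N *
            ∫⁻ s in Set.Ici (0 : ℝ), ENNReal.ofReal (g ν ω s)) ∂P) < ⊤)) :
    ∀ A : Set E, IsOpen A →
      -(⨅ x ∈ A, (J x : EReal)) ≤
        liminf (fun t : ℝ =>
          ((1 / t : ℝ) : EReal) *
            ⨅ ν : I, ENNReal.log (P {ω | L ν t ω ∈ A})) atTop := by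
  intro A hA
  obtain ⟨g, hgmeas, hg01, hgdom, hgexp⟩ := hdom
  rw [EReal.neg_le]
  refine le_iInf₂ fun x hx => ?_
  rw [← EReal.neg_le]
  -- goal : -(J x : EReal) ≤ liminf ...
  rcases eq_or_ne (J x) ⊤ with hJx | hJx
  · simp [hJx]
  set r : ℝ := (J x).toReal with hr_def
  have hr0 : 0 ≤ r := ENNReal.toReal_nonneg
  have hrx : ((r : ℝ) : EReal) = (J x : EReal) := by
    have h1 : ((J x : EReal)).toReal = r := EReal.toReal_coe_ennreal
    rw [← h1]
    exact EReal.coe_toReal (by simp [hJx]) (EReal.coe_ennreal_ne_bot _)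
  -- choose a ball around x inside A
  obtain ⟨ε, hε, hball⟩ := Metric.isOpen_iff.mp hA x hx
  set B : Set E := Metric.ball x (ε / 2) with hB_def
  have hxB : x ∈ B := Metric.mem_ball_self (by positivity)
  have hBA : ∀ y z : E, y ∈ B → dist z y < ε / 2 → z ∈ A := by
    intro y z hy hz
    apply hball
    rw [Metric.mem_ball]
    calc dist z x ≤ dist z y + dist y x := dist_triangle _ _ _
      _ < ε / 2 + ε / 2 := by
          exact add_lt_add hz (by simpa [hB_def, Metric.mem_ball] using hy)
      _ = ε := by ring
  -- Main claim
  have claim : ∀ δ : ℝ, 0 < δ →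
      ((-(r + 2 * δ) : ℝ) : EReal) ≤
        liminf (fun t : ℝ =>
          ((1 / t : ℝ) : EReal) *
            ⨅ ν : I, ENNReal.log (P {ω | L ν t ω ∈ A})) atTop := by
    intro δ hδ
    -- lower bound for the reference family on B
    have h1 : ((-(r + δ) : ℝ) : EReal) <
        liminf (fun t : ℝ =>
          ((1 / t : ℝ) : EReal) *
            ⨅ ν : I, ENNReal.log (P {ω | Lbar (Ψ ν) t ω ∈ B})) atTop := by
      have hlB := hlower B Metric.isOpen_ball
      simp_rw [iInf_range] at hlB
      have hJB : -((J x : EReal)) ≤ -(⨅ y ∈ B, (J y : EReal)) := by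
        rw [EReal.neg_le, neg_neg]
        exact iInf₂_le x hxB
      refine lt_of_lt_of_le ?_ (hJB.trans hlB)
      rw [← hrx, ← EReal.coe_neg, EReal.coe_lt_coe_iff]
      linarith
    have hev1 := eventually_lt_of_lt_liminf h1
    -- choose N
    set N : ℝ := max 1 ((r + δ + 1) * (2 / ε)) with hN_def
    have hN1 : 1 ≤ N := le_max_left _ _
    have hN0 : 0 ≤ N := le_trans zero_le_one hN1
    have hNε : r + δ + 1 ≤ N * (ε / 2) := by
      have h2 : (r + δ + 1) * (2 / ε) ≤ N := le_max_right _ _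
      have : (r + δ + 1) * (2 / ε) * (ε / 2) = r + δ + 1 := by
        field_simp
      nlinarith
    have hC := hgexp N hN1
    set C : ℝ≥0∞ := ⨆ ν : I, ∫⁻ ω, expENN (ENNReal.ofReal N *
        ∫⁻ s in Set.Ici (0 : ℝ), ENNReal.ofReal (g ν ω s)) ∂P with hC_def
    set c : ℝ := C.toReal with hc_def
    have hc0 : 0 ≤ c := ENNReal.toReal_nonneg
    have hCc : C = ENNReal.ofReal c := (ENNReal.ofReal_toReal hC.ne).symm
    -- the eventual bound
    refine le_liminf_of_le (by isBoundedDefault) ?_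
    filter_upwards [eventually_ge_atTop (1 : ℝ), eventually_ge_atTop (2 * c),
      eventually_ge_atTop (Real.log 2 / δ), hev1] with t ht1 htc htδ htref
    have ht0 : (0 : ℝ) < t := lt_of_lt_of_le one_pos ht1
    rw [ereal_le_inv_mul ht0]
    refine le_iInf fun ν => ?_
    -- notation
    set p : ℝ≥0∞ := ENNReal.ofReal (Real.exp (-(r + δ) * t)) with hp_def
    -- Step A : P (Lbar ∈ B) ≥ p
    have hB1 : ((-(r + δ) * t : ℝ) : EReal) ≤
        ENNReal.log (P {ω | Lbar (Ψ ν) t ω ∈ B}) :=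
      le_trans ((ereal_le_inv_mul ht0 _).mp htref.le) (iInf_le _ ν)
    have hPB : p ≤ P {ω | Lbar (Ψ ν) t ω ∈ B} := by
      rw [← ENNReal.log_le_log_iff, hp_def,
        ENNReal.log_ofReal_of_pos (Real.exp_pos _), Real.log_exp]
      exact hB1
    -- Step B : Chernoff bound for the bad event
    set G : Ω → ℝ≥0∞ := fun ω => ∫⁻ s in Set.Ici (0 : ℝ), ENNReal.ofReal (g ν ω s)
      with hG_def
    have hGmeas : Measurable G := by
      apply Measurable.lintegral_prod_right' (f := fun q : Ω × ℝ => ENNReal.ofReal (g ν q.1 q.2))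
      exact ENNReal.measurable_ofReal.comp (hgmeas ν)
    set bad : Set Ω := {ω | ENNReal.ofReal (ε / 2 * t) ≤ G ω} with hbad_def
    -- a.e. inclusion
    have hsub : {ω | Lbar (Ψ ν) t ω ∈ B} ≤ᵐ[P]
        (({ω | L ν t ω ∈ A} ∪ bad : Set Ω) : Set Ω) := by
      filter_upwards [hgdom ν t ht0] with ω hω hωB
      by_cases hd : dist (L ν t ω) (Lbar (Ψ ν) t ω) < ε / 2
      · exact Or.inl (hBA _ _ hωB hd)
      · refine Or.inr ?_
        push_neg at hd
        have h1 : ENNReal.ofReal (ε / 2) ≤ (ENNReal.ofReal t)⁻¹ * G ω := by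
          refine le_trans (le_trans (ENNReal.ofReal_le_ofReal hd) hω) ?_
          exact mul_le_mul_right (lintegral_mono_set Set.Icc_subset_Ici_self) _
        rw [← ENNReal.div_eq_inv_mul] at h1
        have h2 : ENNReal.ofReal (ε / 2) * ENNReal.ofReal t ≤ G ω := by
          refine (ENNReal.le_div_iff_mul_le (Or.inl ?_) (Or.inl ENNReal.ofReal_ne_top)).mp h1
          simpa using ht0
        rw [hbad_def]
        simp only [Set.mem_setOf_eq]
        rw [ENNReal.ofReal_mul (by positivity)]
        exact h2
    have hPbound : P {ω | Lbar (Ψ ν) t ω ∈ B} ≤ P {ω | L ν t ω ∈ A} + P bad :=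
      le_trans (measure_mono_ae hsub) (measure_union_le _ _)
    -- Markov's inequality
    set F : Ω → ℝ≥0∞ := fun ω => expENN (ENNReal.ofReal N * G ω) with hF_def
    have hFmeas : Measurable F :=
      measurable_expENN.comp (hGmeas.const_mul _)
    set a : ℝ≥0∞ := expENN (ENNReal.ofReal N * ENNReal.ofReal (ε / 2 * t)) with ha_def
    have ha_eq : a = ENNReal.ofReal (Real.exp (N * (ε / 2 * t))) := by
      rw [ha_def, ← ENNReal.ofReal_mul hN0, expENN_ofReal (by positivity)]
    have ha0 : a ≠ 0 := by
      rw [ha_eq]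
      simp [Real.exp_pos]
    have haT : a ≠ ⊤ := by rw [ha_eq]; exact ENNReal.ofReal_ne_top
    have hmarkov : a * P {ω | a ≤ F ω} ≤ ∫⁻ ω, F ω ∂P :=
      mul_meas_ge_le_lintegral₀ hFmeas.aemeasurable a
    have hbadsub : bad ⊆ {ω | a ≤ F ω} := by
      intro ω hω
      exact expENN_mono (mul_le_mul_right hω _)
    have hmarkovC : a * P bad ≤ C := by
      refine le_trans (mul_le_mul_right (measure_mono hbadsub) a) (le_trans hmarkov ?_)
      rw [hC_def]
      exact le_iSup (fun ν : I => ∫⁻ ω, expENN (ENNReal.ofReal N *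
        ∫⁻ s in Set.Ici (0 : ℝ), ENNReal.ofReal (g ν ω s)) ∂P) ν
    -- p / 2 computation
    have hp_half : p / 2 = ENNReal.ofReal (Real.exp (-(r + δ) * t) / 2) := by
      rw [ENNReal.ofReal_div_of_pos two_pos, ENNReal.ofReal_ofNat]
    have hCle : C ≤ a * (p / 2) := by
      rw [hCc, ha_eq, hp_half, ← ENNReal.ofReal_mul (Real.exp_pos _).le]
      apply ENNReal.ofReal_le_ofReal
      have hKt : t ≤ (N * (ε / 2) - (r + δ)) * t := by nlinarith
      have hexp1 : Real.exp t ≤ Real.exp ((N * (ε / 2) - (r + δ)) * t) :=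
        Real.exp_le_exp.mpr hKt
      have hexp2 : 2 * c ≤ Real.exp t := by
        have := Real.add_one_le_exp t
        linarith
      have heq : Real.exp (N * (ε / 2 * t)) * (Real.exp (-(r + δ) * t) / 2)
          = Real.exp ((N * (ε / 2) - (r + δ)) * t) / 2 := by
        rw [← mul_div_assoc, ← Real.exp_add]
        ring_nf
      rw [heq]
      linarith
    have hPbad : P bad ≤ p / 2 := by
      rw [← ENNReal.mul_le_mul_iff_right ha0 haT]
      exact le_trans hmarkovC hCle
    -- combine
    have hPA : p / 2 ≤ P {ω | L ν t ω ∈ A} := by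
      have h1 : p ≤ P {ω | L ν t ω ∈ A} + p / 2 :=
        le_trans hPB (le_trans hPbound (add_le_add_right hPbad _))
      have h2 : p - p / 2 ≤ P {ω | L ν t ω ∈ A} := tsub_le_iff_right.mpr h1
      rwa [ENNReal.sub_half (by rw [hp_def]; exact ENNReal.ofReal_ne_top)] at h2
    -- take logs
    rw [hp_half] at hPA
    have hlog : ((-(r + δ) * t - Real.log 2 : ℝ) : EReal) ≤
        ENNReal.log (P {ω | L ν t ω ∈ A}) := by
      have h1 : ENNReal.log (ENNReal.ofReal (Real.exp (-(r + δ) * t) / 2)) ≤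
          ENNReal.log (P {ω | L ν t ω ∈ A}) := ENNReal.log_le_log_iff.mpr hPA
      rwa [ENNReal.log_ofReal_of_pos (by positivity),
        Real.log_div (Real.exp_pos _).ne' two_ne_zero, Real.log_exp] at h1
    refine le_trans ?_ hlog
    rw [EReal.coe_le_coe_iff]
    have hlog2 : Real.log 2 ≤ δ * t := by
      rw [div_le_iff₀ hδ] at htδ
      linarith [htδ]
    nlinarith
  -- conclude from the claim
  rw [← hrx, ← EReal.coe_neg]
  refine le_of_forall_lt fun d hd => ?_
  obtain ⟨e, hde, her⟩ := EReal.exists_between_coe_real hd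
  have her' : e < -r := EReal.coe_lt_coe_iff.mp her
  have hδ : (0 : ℝ) < (-r - e) / 2 := by linarith
  have : -(r + 2 * ((-r - e) / 2)) = e := by ring
  have hcl := claim ((-r - e) / 2) hδ
  rw [this] at hcl
  exact lt_of_lt_of_le hde hcl
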